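/- Let y₁,…,y_m ∈ ℝ³ be unit vectors (m ≥ 1) and let k_p, k_d > 0 satisfy k_d > 1/m and k_p ≤ 4/m − 4/(k_d² m³). Then the 6×6 matrix Q = Σ_{j=1}^m [[ (k_p/(k_d m)) π_{y_j}, (k_p/2) π_{y_j} ],[ (k_p/2) π_{y_j}, (k_d − 1/(k_d m²)) I₃ ]] is positive semidefinite. -/

import Mathlib

open Matrix

noncomputable section

/-- Projector onto the plane orthogonal to the unit vector `y`: `π_y = I₃ - y yᵀ`. -/
def proj (y : Fin 3 → ℝ) : Matrix (Fin 3) (Fin 3) ℝ := 1 - Matrix.vecMulVec y y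


lemma proj_symm (y : Fin 3 → ℝ) : (proj y)ᵀ = proj y := by
  unfold proj
  rw [Matrix.transpose_sub, Matrix.transpose_one]
  congr 1
  ext i j
  simp [Matrix.vecMulVec_apply, mul_comm]

lemma proj_herm (y : Fin 3 → ℝ) : (proj y).IsHermitian := by
  rw [Matrix.IsHermitian, Matrix.conjTranspose_eq_transpose_of_trivial, proj_symm]

lemma proj_idem (y : Fin 3 → ℝ) (hy : y ⬝ᵥ y = 1) : proj y * proj y = proj y := by
  unfold proj
  have h : Matrix.vecMulVec y y * Matrix.vecMulVec y y = Matrix.vecMulVec y y := by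
    ext i j
    simp only [Matrix.mul_apply, Matrix.vecMulVec_apply]
    have : ∑ k, y i * y k * (y k * y j) = (y i * y j) * ∑ k, y k * y k := by
      rw [Finset.mul_sum]; exact Finset.sum_congr rfl fun k _ => by ring
    rw [this, show (∑ k, y k * y k) = y ⬝ᵥ y from rfl, hy, mul_one]
  rw [sub_mul, mul_sub, mul_sub, one_mul, mul_one, h]
  simp

lemma vecMulVec_mulVec' (y v : Fin 3 → ℝ) :
    Matrix.vecMulVec y y *ᵥ v = (y ⬝ᵥ v) • y := by
  funext i
  simp only [Matrix.mulVec, dotProduct, Matrix.vecMulVec_apply, Pi.smul_apply, smul_eq_mul,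
    Finset.sum_mul]
  exact Finset.sum_congr rfl fun k _ => by ring

lemma proj_key (y : Fin 3 → ℝ) (hy : y ⬝ᵥ y = 1) (w z : Fin 3 → ℝ) :
    w ⬝ᵥ (proj y *ᵥ z) = (proj y *ᵥ w) ⬝ᵥ (proj y *ᵥ z) := by
  conv_lhs => rw [← proj_idem y hy, ← Matrix.mulVec_mulVec,
    Matrix.dotProduct_mulVec, ← Matrix.mulVec_transpose, proj_symm]

lemma aux_block (a b c : ℝ) (ha : 0 < a) (hc : 0 ≤ c) (habc : b ^ 2 ≤ a * c)
    (y : Fin 3 → ℝ) (hy : y ⬝ᵥ y = 1) :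
    (Matrix.fromBlocks (a • proj y) (b • proj y) (b • proj y)
      (c • (1 : Matrix (Fin 3) (Fin 3) ℝ))).PosSemidef := by
  have hsm : ∀ r : ℝ, (r • proj y)ᴴ = r • proj y := fun r => by
    rw [Matrix.conjTranspose_smul, (proj_herm y).eq]; simp
  rw [Matrix.posSemidef_iff_dotProduct_mulVec]
  constructor
  · refine Matrix.IsHermitian.fromBlocks (hsm a) (hsm b) ?_
    rw [Matrix.IsHermitian, Matrix.conjTranspose_smul, Matrix.conjTranspose_one]; simp
  · intro x
    have hx : x = Sum.elim (x ∘ Sum.inl) (x ∘ Sum.inr) := (Sum.elim_comp_inl_inr x).symm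
    set u := x ∘ Sum.inl with hu
    set v := x ∘ Sum.inr with hv
    rw [hx, Matrix.fromBlocks_mulVec]
    simp only [star_trivial, sumElim_dotProduct_sumElim, Matrix.smul_mulVec,
      Matrix.one_mulVec, dotProduct_add, dotProduct_smul, smul_eq_mul,
      Sum.elim_comp_inl, Sum.elim_comp_inr]
    set p := proj y *ᵥ u with hp
    set q := proj y *ᵥ v with hq
    have h1 : u ⬝ᵥ p = p ⬝ᵥ p := proj_key y hy u u
    have h2 : u ⬝ᵥ q = p ⬝ᵥ q := proj_key y hy u v
    have h3 : v ⬝ᵥ p = q ⬝ᵥ p := proj_key y hy v u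
    have h4 : q ⬝ᵥ p = p ⬝ᵥ q := dotProduct_comm q p
    have h5 : v ⬝ᵥ v - q ⬝ᵥ q = (y ⬝ᵥ v) ^ 2 := by
      have hvq : v ⬝ᵥ q = q ⬝ᵥ q := proj_key y hy v v
      rw [← hvq]
      have hsub : v ⬝ᵥ v - v ⬝ᵥ q = v ⬝ᵥ ((1 - proj y) *ᵥ v) := by
        rw [Matrix.sub_mulVec, dotProduct_sub, Matrix.one_mulVec]
      rw [hsub, show (1 : Matrix (Fin 3) (Fin 3) ℝ) - proj y = Matrix.vecMulVec y y by
        unfold proj; simp]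
      rw [vecMulVec_mulVec', dotProduct_smul]
      simp [smul_eq_mul, sq, dotProduct_comm]
    have hqq : (0:ℝ) ≤ q ⬝ᵥ q := by simpa using dotProduct_self_star_nonneg q
    have hsq : (0:ℝ) ≤ (a • p + b • q) ⬝ᵥ (a • p + b • q) := by
      simpa using dotProduct_self_star_nonneg (a • p + b • q)
    have hexp : (a • p + b • q) ⬝ᵥ (a • p + b • q)
        = a ^ 2 * (p ⬝ᵥ p) + 2 * a * b * (p ⬝ᵥ q) + b ^ 2 * (q ⬝ᵥ q) := by
      simp only [add_dotProduct, dotProduct_add, smul_dotProduct,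
        dotProduct_smul, smul_eq_mul]
      rw [dotProduct_comm q p]
      ring
    rw [hexp] at hsq
    rw [h1, h2, h3, h4]
    have hv2 : (0:ℝ) ≤ v ⬝ᵥ v - q ⬝ᵥ q := h5 ▸ sq_nonneg _
    nlinarith [hsq, mul_nonneg (sub_nonneg.2 habc) hqq,
      mul_nonneg (mul_nonneg ha.le hc) hv2, ha.le]

/-- positive semidefiniteness of the matrix `Q` of equation (10).  For unit
vectors `y₁,…,y_m` (`m ≥ 1`) and gains `k_p, k_d > 0` with `k_d > 1/m` and
`k_p ≤ 4/m − 4/(k_d²m³)`, the matrix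
`Q = Σ_j [[ (k_p/(k_d m)) π_{y_j}, (k_p/2) π_{y_j} ],[ (k_p/2) π_{y_j}, (k_d − 1/(k_d m²)) I ]]`
is positive semidefinite. -/
theorem stmt18
    (m : ℕ) (hm : 1 ≤ m) (y : Fin m → (Fin 3 → ℝ)) (hy : ∀ i, y i ⬝ᵥ y i = 1)
    (kp kd : ℝ) (hkp : 0 < kp) (hkd0 : 0 < kd)
    (hkd : kd > 1 / (m : ℝ)) (hkple : kp ≤ 4 / (m : ℝ) - 4 / (kd ^ 2 * (m : ℝ) ^ 3)) :
    (∑ j, (Matrix.fromBlocks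
        ((kp / (kd * (m : ℝ))) • proj (y j)) ((kp / 2) • proj (y j))
        ((kp / 2) • proj (y j)) ((kd - 1 / (kd * (m : ℝ) ^ 2)) • 1)
      : Matrix (Fin 3 ⊕ Fin 3) (Fin 3 ⊕ Fin 3) ℝ)).PosSemidef := by
  have hM0 : (0:ℝ) < (m:ℝ) := by exact_mod_cast Nat.pos_of_ne_zero (by omega)
  have hkdM : 1 < kd * (m:ℝ) := by
    rw [gt_iff_lt, div_lt_iff₀ hM0] at hkd; linarith
  have ha : 0 < kp / (kd * (m:ℝ)) := by positivity
  have hc : 0 ≤ kd - 1 / (kd * (m:ℝ)^2) := by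
    rw [sub_nonneg, div_le_iff₀ (by positivity)]
    nlinarith
  have habc : (kp/2)^2 ≤ (kp / (kd * (m:ℝ))) * (kd - 1 / (kd * (m:ℝ)^2)) := by
    have h2 : (kp / (kd * (m:ℝ))) * (kd - 1 / (kd * (m:ℝ)^2))
        = kp / (m:ℝ) - kp / (kd^2 * (m:ℝ)^3) := by
      field_simp
    have h3 : (kp/4) * kp ≤ (kp/4) * (4 / (m:ℝ) - 4 / (kd ^ 2 * (m:ℝ) ^ 3)) :=
      mul_le_mul_of_nonneg_left hkple (by positivity)
    have h4 : (kp/4) * (4 / (m:ℝ) - 4 / (kd ^ 2 * (m:ℝ) ^ 3))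
        = kp / (m:ℝ) - kp / (kd^2 * (m:ℝ)^3) := by
      field_simp
    rw [h2, ← h4]
    nlinarith [h3]
  refine Finset.sum_induction _ _ (fun A B hA hB => hA.add hB) ?_ ?_
  · exact Matrix.PosSemidef.zero
  · exact fun j _ => aux_block _ _ _ ha hc habc (y j) (hy j)
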